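/- Fix f ∈ ℝ^D, a matrix W ∈ ℝ^{D×N} with columns w₁,…,w_N, a probability vector p̃ with positive entries, and constants α > β > 0. Define p̂ = σ(Wᵀf) and L = (α−β)·Σⱼ p̂ⱼ log p̂ⱼ − α·Σⱼ p̂ⱼ log p̃ⱼ. Then the gradient of L with respect to wₙ equals [(α−β)·log p̂ₙ − α·log p̃ₙ − L] · p̂ₙ · f. -/

import Mathlib

open Real Finset

noncomputable def softmax (N : ℕ) (y : Fin N → ℝ) (i : Fin N) : ℝ :=
  Real.exp (y i) / ∑ j, Real.exp (y j)

/-- The network prediction `p̂ = σ(Wᵀf)`, where `W n` is the `n`-th column `wₙ ∈ ℝ^D`. -/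
noncomputable def phat (D N : ℕ) (f : Fin D → ℝ) (W : Fin N → Fin D → ℝ) : Fin N → ℝ :=
  softmax N (fun i => ∑ d, W i d * f d)

/-- The D2 loss `L = (α−β)·Σⱼ p̂ⱼ log p̂ⱼ − α·Σⱼ p̂ⱼ log p̃ⱼ` as a function of `W`. -/
noncomputable def D2Loss (D N : ℕ) (α β : ℝ) (f : Fin D → ℝ) (ptil : Fin N → ℝ)
    (W : Fin N → Fin D → ℝ) : ℝ :=
  (α - β) * ∑ j, phat D N f W j * Real.log (phat D N f W j)
    - α * ∑ j, phat D N f W j * Real.log (ptil j)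

/-- logit `j` of the updated matrix, as a function of the varying entry `t`. -/
noncomputable def Yaux (D N : ℕ) (f : Fin D → ℝ) (W : Fin N → Fin D → ℝ)
    (n : Fin N) (d : Fin D) (j : Fin N) (t : ℝ) : ℝ :=
  ∑ d', Function.update W n (Function.update (W n) d t) j d' * f d'

/-- the softmax denominator. -/
noncomputable def Eaux (D N : ℕ) (f : Fin D → ℝ) (W : Fin N → Fin D → ℝ)
    (n : Fin N) (d : Fin D) (t : ℝ) : ℝ :=
  ∑ j, Real.exp (Yaux D N f W n d j t)

theorem stmt7 (D N : ℕ) (f : Fin D → ℝ) (W : Fin N → Fin D → ℝ)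
    (ptil : Fin N → ℝ) (hptil_pos : ∀ j, 0 < ptil j) (hptil_sum : ∑ j, ptil j = 1)
    (α β : ℝ) (hβ : 0 < β) (hαβ : β < α) (n : Fin N) (d : Fin D) :
    HasDerivAt
      (fun t : ℝ => D2Loss D N α β f ptil (Function.update W n (Function.update (W n) d t)))
      (((α - β) * Real.log (phat D N f W n) - α * Real.log (ptil n)
          - D2Loss D N α β f ptil W) * phat D N f W n * f d)
      (W n d) := by
  classical
  set c : ℝ := f d with hc
  set t₀ : ℝ := W n d with ht₀
  set Y : Fin N → ℝ → ℝ := fun j t => Yaux D N f W n d j t with hY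
  set E : ℝ → ℝ := fun t => Eaux D N f W n d t with hEdef
  have hEpos : ∀ t, 0 < E t := by
    intro t
    exact Finset.sum_pos (fun j _ => Real.exp_pos _) ⟨n, Finset.mem_univ n⟩
  -- the probabilities at the base point
  set p : Fin N → ℝ := fun j => Real.exp (Y j t₀) / E t₀ with hp
  -- derivative of the logits
  have hYderiv : ∀ j, HasDerivAt (Y j) (if j = n then c else 0) t₀ := by
    intro j
    rcases eq_or_ne j n with rfl | hj
    · have : Y j = fun t => ∑ d', Function.update (W j) d t d' * f d' := by
        funext t
        simp [hY, Yaux]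
      rw [this, if_pos rfl]
      have hsum : HasDerivAt (fun t : ℝ => ∑ d', Function.update (W j) d t d' * f d')
          (∑ d', if d' = d then c else 0) t₀ := by
        apply HasDerivAt.fun_sum
        intro d' _
        rcases eq_or_ne d' d with rfl | hd
        · simp only [if_pos rfl]
          have : (fun t : ℝ => Function.update (W j) d' t d' * f d') = fun t => t * f d' := by
            funext t; simp
          rw [this]
          simpa using (hasDerivAt_id t₀).mul_const (f d')
        · have : (fun t : ℝ => Function.update (W j) d t d' * f d') = fun _ => W j d' * f d' := by
            funext t; simp [Function.update_of_ne hd]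
          rw [this, if_neg hd]
          exact hasDerivAt_const _ _
      simpa using hsum
    · have : Y j = fun _ => ∑ d', W j d' * f d' := by
        funext t
        simp [hY, Yaux, Function.update_of_ne hj]
      rw [this, if_neg hj]
      exact hasDerivAt_const _ _
  -- derivative of the denominator
  have hEderiv : HasDerivAt E (Real.exp (Y n t₀) * c) t₀ := by
    have hsum : HasDerivAt (fun t => ∑ j, Real.exp (Y j t))
        (∑ j, Real.exp (Y j t₀) * (if j = n then c else 0)) t₀ :=
      HasDerivAt.fun_sum (fun j _ => (hYderiv j).exp)
    have : (∑ j, Real.exp (Y j t₀) * (if j = n then c else 0)) = Real.exp (Y n t₀) * c := by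
      rw [Finset.sum_eq_single n]
      · simp
      · intro b _ hb; simp [hb]
      · intro h; exact absurd (Finset.mem_univ n) h
    rw [← this]
    exact hsum
  have hlogE : HasDerivAt (fun t => Real.log (E t)) (Real.exp (Y n t₀) * c / E t₀) t₀ :=
    hEderiv.log (hEpos t₀).ne'
  -- derivative of each probability
  have hpd : ∀ j, HasDerivAt (fun t => Real.exp (Y j t) / E t)
      (p j * ((if j = n then c else 0) - p n * c)) t₀ := by
    intro j
    have h : HasDerivAt (fun t => Real.exp (Y j t) / E t) _ t₀ := ((hYderiv j).exp.div hEderiv (hEpos t₀).ne')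
    convert h using 1
    have hE0 := (hEpos t₀).ne'
    by_cases hj : j = n
    · subst hj
      simp only [eq_self_iff_true, if_true]
      simp only [hp]
      field_simp
      try ring
      try (left; ring)
    · simp only [if_neg hj]
      simp only [hp]
      field_simp
      try ring
      try (left; ring)
  -- derivative of each entropy-type summand
  have h1 : ∀ j, HasDerivAt (fun t => Real.exp (Y j t) / E t * (Y j t - Real.log (E t)))
      (p j * ((if j = n then c else 0) - p n * c) * ((Y j t₀ - Real.log (E t₀)) + 1)) t₀ := by
    intro j
    have h : HasDerivAt (fun t => Real.exp (Y j t) / E t * (Y j t - Real.log (E t))) _ t₀ := (hpd j).mul ((hYderiv j).sub hlogE)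
    convert h using 1
    have hE0 := (hEpos t₀).ne'
    by_cases hj : j = n
    · subst hj
      simp only [eq_self_iff_true, if_true]
      simp only [hp]
      field_simp
      try ring
      try (left; ring)
    · simp only [if_neg hj]
      simp only [hp]
      field_simp
      try ring
      try (left; ring)
  -- derivative of the whole loss along the path
  have hF : HasDerivAt (fun t =>
      (α - β) * ∑ j, Real.exp (Y j t) / E t * (Y j t - Real.log (E t))
        - α * ∑ j, Real.exp (Y j t) / E t * Real.log (ptil j))
      ((α - β) * ∑ j, p j * ((if j = n then c else 0) - p n * c) * ((Y j t₀ - Real.log (E t₀)) + 1)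
        - α * ∑ j, p j * ((if j = n then c else 0) - p n * c) * Real.log (ptil j)) t₀ := by
    apply HasDerivAt.sub
    · exact (HasDerivAt.fun_sum (fun j _ => h1 j)).const_mul _
    · exact (HasDerivAt.fun_sum (fun j _ => (hpd j).mul_const _)).const_mul _
  -- the theorem's function equals the path function
  have hfun : (fun t : ℝ =>
      D2Loss D N α β f ptil (Function.update W n (Function.update (W n) d t)))
      = (fun t =>
      (α - β) * ∑ j, Real.exp (Y j t) / E t * (Y j t - Real.log (E t))
        - α * ∑ j, Real.exp (Y j t) / E t * Real.log (ptil j)) := by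
    funext t
    have hlog : ∀ j, Real.log (Real.exp (Y j t) / E t) = Y j t - Real.log (E t) := by
      intro j
      rw [Real.log_div (Real.exp_ne_zero _) (hEpos t).ne', Real.log_exp]
    show (α - β) * ∑ j, Real.exp (Y j t) / E t * Real.log (Real.exp (Y j t) / E t)
        - α * ∑ j, Real.exp (Y j t) / E t * Real.log (ptil j) = _
    simp only [hlog]
  -- identify base-point values
  have hWt₀ : Function.update W n (Function.update (W n) d t₀) = W := by
    rw [ht₀, Function.update_eq_self, Function.update_eq_self]
  have hYt₀ : ∀ j, Y j t₀ = ∑ d', W j d' * f d' := by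
    intro j
    simp [hY, Yaux, hWt₀]
  have hphat : ∀ j, phat D N f W j = p j := by
    intro j
    have hE' : E t₀ = ∑ i, Real.exp (Y i t₀) := rfl
    simp only [hp, hE', hYt₀, phat, softmax]
  have hlogphat : ∀ j, Real.log (phat D N f W j) = Y j t₀ - Real.log (E t₀) := by
    intro j
    rw [hphat j, hp]
    rw [Real.log_div (Real.exp_ne_zero _) (hEpos t₀).ne', Real.log_exp]
  have hpsum : ∑ j, p j = 1 := by
    simp only [hp]
    rw [← Finset.sum_div]
    exact div_self (hEpos t₀).ne'
  -- sum manipulation key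
  have key : ∀ g : Fin N → ℝ,
      ∑ j, p j * ((if j = n then c else 0) - p n * c) * g j
        = c * p n * (g n - ∑ j, p j * g j) := by
    intro g
    have step : ∀ j : Fin N, p j * ((if j = n then c else 0) - p n * c) * g j
        = (if j = n then c * p n * g n else 0) - c * p n * (p j * g j) := by
      intro j
      by_cases hj : j = n
      · subst hj; simp only [eq_self_iff_true, if_true]; ring
      · simp only [if_neg hj]; ring
    rw [Finset.sum_congr rfl (fun j _ => step j), Finset.sum_sub_distrib,
      Finset.sum_ite_eq' Finset.univ n (fun _ => c * p n * g n)]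
    simp [← Finset.mul_sum, mul_sub]
  rw [hfun]
  convert hF using 1
  rw [key, key]
  have hsplit : ∑ j, p j * ((Y j t₀ - Real.log (E t₀)) + 1)
      = (∑ j, p j * (Y j t₀ - Real.log (E t₀))) + 1 := by
    simp_rw [mul_add, mul_one]
    rw [Finset.sum_add_distrib, hpsum]
  rw [hsplit]
  have hA : ∑ j, phat D N f W j * Real.log (phat D N f W j)
      = ∑ j, p j * (Y j t₀ - Real.log (E t₀)) :=
    Finset.sum_congr rfl fun j _ => by rw [hlogphat j, hphat j]
  have hB : ∑ j, phat D N f W j * Real.log (ptil j) = ∑ j, p j * Real.log (ptil j) :=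
    Finset.sum_congr rfl fun j _ => by rw [hphat j]
  have hL : D2Loss D N α β f ptil W
      = (α - β) * (∑ j, p j * (Y j t₀ - Real.log (E t₀))) - α * ∑ j, p j * Real.log (ptil j) := by
    rw [D2Loss, hA, hB]
  rw [hL, hlogphat n, hphat n]
  ring
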